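/- (Singleton-type bound for the weighted-Hamming error-correction capability.) Every k-dimensional linear code C ⊆ F_q^n contains a nonzero codeword c whose support is contained in the first n−k+1 coordinates; consequently, letting c* ∈ F_q^n be any vector with c*_i ≠ 0 exactly for i ≤ n−k+1, every k-dimensional linear code satisfies t_λ(C) ≤ τ_λ(c*). -/

import Mathlib

variable {F : Type} [Field F] [Fintype F] [DecidableEq F]

/-- Weighted-Hamming weight of `a : Fin n → F`, where coordinate `i` belongs to
block `B i` and block `ℓ` carries scaling coefficient `lam ℓ`. -/
def wLf (n m : ℕ) (B : Fin n → Fin m) (lam : Fin m → ℕ) (a : Fin n → F) : ℕ :=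
  ∑ i, if a i = 0 then 0 else lam (B i)

/-- Error-correction radius `τ_λ(c)`. -/
noncomputable def tauf (n m : ℕ) (B : Fin n → Fin m) (lam : Fin m → ℕ)
    (c : Fin n → F) : ℕ :=
  sInf {x | ∃ r : Fin n → F, x = max (wLf n m B lam r) (wLf n m B lam (c - r))} - 1

/-- Error-correction capability `t_λ(C)` of a linear code. -/
noncomputable def tLf (n m : ℕ) (B : Fin n → Fin m) (lam : Fin m → ℕ)
    (C : Submodule F (Fin n → F)) : ℕ :=
  sInf {x | ∃ c ∈ C, c ≠ 0 ∧ x = tauf n m B lam c}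

lemma wLf_mono (n m : ℕ) (B : Fin n → Fin m) (lam : Fin m → ℕ) {a b : Fin n → F}
    (h : ∀ i, a i ≠ 0 → b i ≠ 0) : wLf n m B lam a ≤ wLf n m B lam b := by
  apply Finset.sum_le_sum
  intro i _
  by_cases ha : a i = 0
  · simp [ha]
  · simp [ha, h i ha]

lemma tauf_mono (n m : ℕ) (B : Fin n → Fin m) (lam : Fin m → ℕ) {c c' : Fin n → F}
    (h : ∀ i, c i ≠ 0 → c' i ≠ 0) : tauf n m B lam c ≤ tauf n m B lam c' := by
  apply Nat.sub_le_sub_right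
  set S := {x | ∃ r : Fin n → F, x = max (wLf n m B lam r) (wLf n m B lam (c - r))}
  set S' := {x | ∃ r : Fin n → F, x = max (wLf n m B lam r) (wLf n m B lam (c' - r))}
  have hne : S'.Nonempty := ⟨_, 0, rfl⟩
  have hmem := Nat.sInf_mem hne
  obtain ⟨r', hr'⟩ := hmem
  set r : Fin n → F := fun i => r' i * (c' i)⁻¹ * c i with hrdef
  have h1 : wLf n m B lam r ≤ wLf n m B lam r' := by
    apply wLf_mono
    intro i hi
    intro h0
    apply hi
    simp [hrdef, h0]
  have h2 : wLf n m B lam (c - r) ≤ wLf n m B lam (c' - r') := by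
    apply wLf_mono
    intro i hi
    simp only [Pi.sub_apply, hrdef] at hi ⊢
    intro h0
    apply hi
    by_cases hc0 : c i = 0
    · simp [hc0]
    · have hc'0 : c' i ≠ 0 := h i hc0
      have hr : r' i = c' i := (sub_eq_zero.mp h0).symm
      rw [hr]
      field_simp
      simp
  calc sInf S ≤ max (wLf n m B lam r) (wLf n m B lam (c - r)) := Nat.sInf_le ⟨r, rfl⟩
    _ ≤ max (wLf n m B lam r') (wLf n m B lam (c' - r')) := max_le_max h1 h2
    _ = sInf S' := hr'.symm

theorem singleton_bound_tau (n m k : ℕ) (B : Fin n → Fin m) (hB : Monotone B)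
    (lam : Fin m → ℕ) (hlam : Monotone lam)
    (cstar : Fin n → F) (hc : ∀ i : Fin n, cstar i ≠ 0 ↔ (i : ℕ) < n - k + 1)
    (C : Submodule F (Fin n → F)) (hk : Module.finrank F C = k) (h1 : 1 ≤ k) :
    (∃ c ∈ C, c ≠ 0 ∧ ∀ i : Fin n, n - k + 1 ≤ (i : ℕ) → c i = 0) ∧
      tLf n m B lam C ≤ tauf n m B lam cstar := by
  set a := n - k + 1 with ha
  have hkn : k ≤ n := by
    have := Submodule.finrank_le C
    simpa [hk, Module.finrank_pi] using this
  -- the projection map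
  set f : C →ₗ[F] ({i : Fin n // a ≤ (i : ℕ)} → F) :=
    (LinearMap.pi (fun j : {i : Fin n // a ≤ (i : ℕ)} => LinearMap.proj j.1)).comp C.subtype
    with hf
  have hcard : Fintype.card {i : Fin n // a ≤ (i : ℕ)} = k - 1 := by
    have e : {i : Fin n // a ≤ (i : ℕ)} ≃ Fin (k - 1) :=
      { toFun := fun j => ⟨(j : ℕ) - a, by have := j.1.isLt; have := j.2; omega⟩
        invFun := fun i => ⟨⟨a + i, by have := i.isLt; omega⟩, by simp⟩
        left_inv := fun j => by
          ext
          have := j.2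
          simp
          omega
        right_inv := fun i => by
          ext
          simp }
    rw [Fintype.card_congr e, Fintype.card_fin]
  have hnotinj : ¬ Function.Injective f := by
    intro hinj
    have := LinearMap.finrank_le_finrank_of_injective hinj
    rw [hk, Module.finrank_pi, hcard] at this
    omega
  have hker : LinearMap.ker f ≠ ⊥ := by
    intro h0
    exact hnotinj (LinearMap.ker_eq_bot.mp h0)
  obtain ⟨x, hx, hx0⟩ := (Submodule.ne_bot_iff _).mp hker
  have hcC : (x : Fin n → F) ∈ C := x.2
  have hcne : (x : Fin n → F) ≠ 0 := by
    simpa [Submodule.coe_eq_zero] using hx0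
  have hsupp : ∀ i : Fin n, a ≤ (i : ℕ) → (x : Fin n → F) i = 0 := by
    intro i hi
    have := congrFun (LinearMap.mem_ker.mp hx) ⟨i, hi⟩
    simpa [hf] using this
  refine ⟨⟨x, hcC, hcne, hsupp⟩, ?_⟩
  have h3 : tLf n m B lam C ≤ tauf n m B lam (x : Fin n → F) :=
    Nat.sInf_le ⟨x, hcC, hcne, rfl⟩
  refine h3.trans (tauf_mono n m B lam ?_)
  intro i hi
  rw [hc]
  by_contra hlt
  exact hi (hsupp i (by omega))
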